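/- Let ρ be a density matrix on the bipartite system ℂ^{dA} ⊗ ℂ^{dB}, and define γ(ρ) := inf { a₊ + a₋ : a₊, a₋ ≥ 0 and ρ = a₊·ρ₊ − a₋·ρ₋ for some separable density matrices ρ₊, ρ₋ }. Then γ(ρ) = 1 + 2·E(ρ), where E is the robustness of entanglement. -/

import Mathlib

open Matrix Complex Kronecker
open scoped ComplexOrder

noncomputable section

/-- A density matrix: positive semidefinite with trace 1. -/
def IsDensityMatrix {d : Type*} [Fintype d] (ρ : Matrix d d ℂ) : Prop :=
  ρ.PosSemidef ∧ ρ.trace = 1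

/-- A separable state on a bipartite system: a finite convex combination of Kronecker
products of density matrices. -/
def SeparableState {dA dB : Type*} [Fintype dA] [Fintype dB]
    (ρ : Matrix (dA × dB) (dA × dB) ℂ) : Prop :=
  ∃ (n : ℕ) (p : Fin n → ℝ) (σ : Fin n → Matrix dA dA ℂ) (τ : Fin n → Matrix dB dB ℂ),
    (∀ k, 0 ≤ p k) ∧ (∑ k, p k) = 1 ∧
    (∀ k, IsDensityMatrix (σ k)) ∧ (∀ k, IsDensityMatrix (τ k)) ∧
    ρ = ∑ k, (p k : ℂ) • ((σ k) ⊗ₖ (τ k))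

/-- The robustness of entanglement. -/
def robustness {dA dB : Type*} [Fintype dA] [Fintype dB]
    (ρ : Matrix (dA × dB) (dA × dB) ℂ) : ℝ :=
  sInf { t : ℝ | 0 ≤ t ∧ ∃ σ : Matrix (dA × dB) (dA × dB) ℂ,
    SeparableState σ ∧ SeparableState (((1 + t : ℝ) : ℂ)⁻¹ • (ρ + (t : ℂ) • σ)) }

/-- γ(ρ): optimal one-norm of a quasiprobability decomposition into separable states. -/
def gammaSep {dA dB : Type*} [Fintype dA] [Fintype dB]
    (ρ : Matrix (dA × dB) (dA × dB) ℂ) : ℝ :=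
  sInf { c : ℝ | ∃ (ap am : ℝ) (ρp ρm : Matrix (dA × dB) (dA × dB) ℂ),
    0 ≤ ap ∧ 0 ≤ am ∧ SeparableState ρp ∧ SeparableState ρm ∧
    ρ = (ap : ℂ) • ρp - (am : ℂ) • ρm ∧ c = ap + am }

/-- Singular values of a complex matrix: square roots of eigenvalues of `Mᴴ * M`. -/
def singularValues {m n : Type*} [Fintype m] [Fintype n] [DecidableEq n]
    (M : Matrix m n ℂ) : n → ℝ :=
  fun i => Real.sqrt ((Matrix.isHermitian_conjTranspose_mul_self M).eigenvalues i)

set_option linter.unusedSectionVars false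
set_option maxHeartbeats 1000000

namespace Aux

section OneSide
variable {d : Type*} [Fintype d] [DecidableEq d]

def outer (v : d → ℂ) : Matrix d d ℂ := vecMulVec v (star v)

lemma outer_posSemidef (v : d → ℂ) : (outer v).PosSemidef := by
  refine posSemidef_iff_dotProduct_mulVec.mpr ⟨?_, ?_⟩
  · ext i j
    simp [outer, vecMulVec_apply, conjTranspose_apply, mul_comm]
  · intro x
    have hmv : (outer v) *ᵥ x = (star v ⬝ᵥ x) • v := by
      ext i
      simp [outer, mulVec, dotProduct, vecMulVec_apply, Finset.mul_sum, mul_comm, mul_left_comm]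
    have hsx : star x ⬝ᵥ v = star (star v ⬝ᵥ x) := by
      simp [dotProduct, star_sum, mul_comm]
    rw [hmv, dotProduct_smul, smul_eq_mul, hsx]
    exact mul_star_self_nonneg _

lemma trace_outer (v : d → ℂ) : (outer v).trace = ((∑ i, Complex.normSq (v i) : ℝ) : ℂ) := by
  simp [outer, Matrix.trace, Matrix.diag, vecMulVec_apply, Complex.mul_conj]

lemma smul_posSemidef {c : ℝ} (hc : 0 ≤ c) {M : Matrix d d ℂ} (hM : M.PosSemidef) :
    ((c : ℂ) • M).PosSemidef := by
  refine posSemidef_iff_dotProduct_mulVec.mpr ⟨?_, ?_⟩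
  · ext i j
    simp [conjTranspose_apply, hM.1.apply]
  · intro x
    rw [smul_mulVec, dotProduct_smul, smul_eq_mul]
    exact mul_nonneg (by exact_mod_cast hc) (hM.dotProduct_mulVec_nonneg x)

lemma outer_mem_span (v : d → ℂ) :
    outer v ∈ Submodule.span ℂ {M : Matrix d d ℂ | IsDensityMatrix M} := by
  by_cases hv : v = 0
  · have : outer v = 0 := by ext i j; simp [hv, outer, vecMulVec_apply]
    rw [this]; exact Submodule.zero_mem _
  · set c : ℝ := ∑ i, Complex.normSq (v i) with hc
    have hcpos : 0 < c := by
      have : ∃ i, v i ≠ 0 := by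
        by_contra h
        push_neg at h
        exact hv (funext fun i => h i)
      obtain ⟨i, hi⟩ := this
      exact Finset.sum_pos' (fun j _ => Complex.normSq_nonneg _)
        ⟨i, Finset.mem_univ i, Complex.normSq_pos.mpr hi⟩
    have hd : IsDensityMatrix (((c⁻¹ : ℝ) : ℂ) • outer v) := by
      refine ⟨smul_posSemidef (by positivity) (outer_posSemidef v), ?_⟩
      rw [Matrix.trace_smul, trace_outer v, smul_eq_mul, ← hc, ← Complex.ofReal_mul,
        inv_mul_cancel₀ hcpos.ne']
      simp
    have : outer v = ((c : ℝ) : ℂ) • (((c⁻¹ : ℝ) : ℂ) • outer v) := by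
      rw [smul_smul, ← Complex.ofReal_mul, mul_inv_cancel₀ hcpos.ne']
      simp
    rw [this]
    exact Submodule.smul_mem _ _ (Submodule.subset_span hd)

lemma stdBasisMatrix_mem_span (i j : d) :
    Matrix.single i j (1:ℂ) ∈ Submodule.span ℂ {M : Matrix d d ℂ | IsDensityMatrix M} := by
  by_cases hij : i = j
  · subst hij
    have : Matrix.single i i (1:ℂ) = outer (Pi.single i 1) := by
      ext a b
      simp [outer, vecMulVec_apply, Pi.single_apply, Matrix.single, Matrix.of_apply]
      aesop
    rw [this]; exact outer_mem_span _
  · set u : d → ℂ := fun a => (if a = i then 1 else 0) + (if a = j then 1 else 0) with hu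
    set w : d → ℂ := fun a => (if a = i then 1 else 0) + (if a = j then Complex.I else 0) with hw
    set ei : d → ℂ := fun a => if a = i then 1 else 0 with hei
    set ej : d → ℂ := fun a => if a = j then 1 else 0 with hej
    have key : Matrix.single i j (1:ℂ) =
        ((1:ℂ)/2) • outer u + (Complex.I/2) • outer w
        - ((1 + Complex.I)/2) • (outer ei + outer ej) := by
      ext a b
      simp only [outer, vecMulVec_apply, Matrix.add_apply, Matrix.sub_apply, Matrix.smul_apply,
        Pi.star_apply, Matrix.single, Matrix.of_apply, smul_eq_mul, hu, hw, hei, hej,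
        star_add, Complex.star_def, Complex.conj_I]
      by_cases ha : a = i <;> by_cases hb : b = j <;> by_cases ha2 : a = j <;>
        by_cases hb2 : b = i <;>
        (try simp_all) <;> (try simp [Ne.symm hij]) <;>
        (first
          | rfl
          | ring1
          | linear_combination (1/2 : ℂ) * Complex.I_sq
          | linear_combination (-1/2 : ℂ) * Complex.I_sq
          | linear_combination (1/2 : ℂ) * Complex.I_mul_I
          | linear_combination (-1/2 : ℂ) * Complex.I_mul_I
          | linear_combination ((1:ℂ)/2 - Complex.I/2) * Complex.I_mul_I
          | linear_combination ((1:ℂ)/2 + Complex.I/2) * Complex.I_mul_I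
          | aesop)
    rw [key]
    have h1 := outer_mem_span u
    have h2 := outer_mem_span w
    have h3 := outer_mem_span ei
    have h4 := outer_mem_span ej
    exact Submodule.sub_mem _ (Submodule.add_mem _ (Submodule.smul_mem _ _ h1)
      (Submodule.smul_mem _ _ h2)) (Submodule.smul_mem _ _ (Submodule.add_mem _ h3 h4))

lemma mem_span_density (M : Matrix d d ℂ) :
    M ∈ Submodule.span ℂ {N : Matrix d d ℂ | IsDensityMatrix N} := by
  rw [matrix_eq_sum_single M]
  refine Submodule.sum_mem _ fun i _ => Submodule.sum_mem _ fun j _ => ?_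
  have : Matrix.single i j (M i j) = (M i j) • Matrix.single i j (1:ℂ) := by
    rw [smul_single, smul_eq_mul, mul_one]
  rw [this]
  exact Submodule.smul_mem _ _ (stdBasisMatrix_mem_span i j)


lemma exists_density (d : Type*) [Fintype d] [DecidableEq d] [Nonempty d] :
    ∃ M : Matrix d d ℂ, IsDensityMatrix M := by
  refine ⟨outer ((Pi.single (Classical.arbitrary d) (1:ℂ) : d → ℂ)), outer_posSemidef _, ?_⟩
  rw [trace_outer]
  have h1 : (∑ i, Complex.normSq ((Pi.single (Classical.arbitrary d) (1:ℂ) : d → ℂ) i)) = 1 := by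
    have h2 : ∀ x : d, Complex.normSq ((Pi.single (Classical.arbitrary d) (1:ℂ) : d → ℂ) x)
        = (if x = Classical.arbitrary d then (1:ℝ) else 0) := by
      intro x; rw [Pi.single_apply]; split <;> simp
    rw [Finset.sum_congr rfl fun x _ => h2 x, Finset.sum_ite_eq']
    simp
  rw [h1]; simp

end OneSide

section Two
variable {dA dB : Type*} [Fintype dA] [DecidableEq dA] [Fintype dB] [DecidableEq dB]

lemma conjTranspose_kron (A : Matrix dA dA ℂ) (B : Matrix dB dB ℂ) :
    (A ⊗ₖ B)ᴴ = Aᴴ ⊗ₖ Bᴴ := by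
  ext ⟨a, b⟩ ⟨c, e⟩
  simp [conjTranspose_apply, kroneckerMap_apply, star_mul', mul_comm]

def ProdDensity (dA dB : Type*) [Fintype dA] [Fintype dB] :
    Set (Matrix (dA × dB) (dA × dB) ℂ) :=
  {P | ∃ (σ : Matrix dA dA ℂ) (τ : Matrix dB dB ℂ),
    IsDensityMatrix σ ∧ IsDensityMatrix τ ∧ P = σ ⊗ₖ τ}

lemma kron_mem_span {A : Matrix dA dA ℂ} {B : Matrix dB dB ℂ}
    (hA : A ∈ Submodule.span ℂ {M : Matrix dA dA ℂ | IsDensityMatrix M})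
    (hB : B ∈ Submodule.span ℂ {M : Matrix dB dB ℂ | IsDensityMatrix M}) :
    A ⊗ₖ B ∈ Submodule.span ℂ (ProdDensity dA dB) := by
  induction hA using Submodule.span_induction with
  | mem x hx =>
    induction hB using Submodule.span_induction with
    | mem y hy => exact Submodule.subset_span ⟨x, y, hx, hy, rfl⟩
    | zero => rw [kronecker_zero]; exact Submodule.zero_mem _
    | add y z hy hz iy iz => rw [kronecker_add]; exact Submodule.add_mem _ iy iz
    | smul c y hy iy => rw [kronecker_smul]; exact Submodule.smul_mem _ _ iy
  | zero => rw [zero_kronecker]; exact Submodule.zero_mem _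
  | add y z hy hz iy iz => rw [add_kronecker]; exact Submodule.add_mem _ iy iz
  | smul c y hy iy => rw [smul_kronecker]; exact Submodule.smul_mem _ _ iy

lemma stdBasis_kron (i k : dA) (j l : dB) :
    Matrix.single ((i,j) : dA × dB) ((k,l) : dA × dB) (1:ℂ) =
      Matrix.single i k (1:ℂ) ⊗ₖ Matrix.single j l (1:ℂ) := by
  ext ⟨a, b⟩ ⟨c, e⟩
  simp only [Matrix.single, Matrix.of_apply, kroneckerMap_apply, Prod.mk.injEq]
  by_cases h1 : i = a <;> by_cases h2 : j = b <;> by_cases h3 : k = c <;> by_cases h4 : l = e <;>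
    simp_all


lemma mem_span_prodDensity (M : Matrix (dA × dB) (dA × dB) ℂ) :
    M ∈ Submodule.span ℂ (ProdDensity dA dB) := by
  rw [matrix_eq_sum_single M]
  refine Submodule.sum_mem _ fun p _ => Submodule.sum_mem _ fun q _ => ?_
  have h : Matrix.single p q (M p q) = (M p q) • Matrix.single p q (1:ℂ) := by
    rw [smul_single, smul_eq_mul, mul_one]
  rw [h]
  refine Submodule.smul_mem _ _ ?_
  obtain ⟨i, j⟩ := p
  obtain ⟨k, l⟩ := q
  rw [stdBasis_kron]
  exact kron_mem_span (mem_span_density _) (mem_span_density _)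

lemma exists_real_decomp (ρ : Matrix (dA × dB) (dA × dB) ℂ) (hher : ρ.IsHermitian) :
    ∃ (n : ℕ) (r : Fin n → ℝ) (σ : Fin n → Matrix dA dA ℂ) (τ : Fin n → Matrix dB dB ℂ),
      (∀ k, IsDensityMatrix (σ k)) ∧ (∀ k, IsDensityMatrix (τ k)) ∧
      ρ = ∑ k, ((r k : ℝ) : ℂ) • (σ k ⊗ₖ τ k) := by
  obtain ⟨n, f, g, hg⟩ := Submodule.mem_span_set'.mp (mem_span_prodDensity ρ)
  choose σ τ hσ hτ hP using fun k => (g k).2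
  have h1 : ρ = ∑ k, f k • (σ k ⊗ₖ τ k) := by
    rw [← hg]
    exact Finset.sum_congr rfl fun k _ => by rw [← hP k]
  refine ⟨n, fun k => (f k).re, σ, τ, hσ, hτ, ?_⟩
  have hker : ∀ k, ((σ k) ⊗ₖ (τ k))ᴴ = (σ k) ⊗ₖ (τ k) := fun k => by
    rw [conjTranspose_kron, (hσ k).1.1, (hτ k).1.1]
  have h2 : ρ = ∑ k, (starRingEnd ℂ) (f k) • (σ k ⊗ₖ τ k) := by
    conv_lhs => rw [← hher, h1]
    rw [conjTranspose_sum]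
    exact Finset.sum_congr rfl fun k _ => by
      rw [conjTranspose_smul, hker k]; rfl
  have h3 : (2:ℂ) • ρ = (2:ℂ) • ∑ k, (((f k).re : ℝ) : ℂ) • (σ k ⊗ₖ τ k) := by
    have := congrArg₂ (· + ·) h1 h2
    simp only at this
    rw [two_smul, Finset.smul_sum]
    calc ρ + ρ = ∑ k, (f k + (starRingEnd ℂ) (f k)) • (σ k ⊗ₖ τ k) := by
          rw [this, ← Finset.sum_add_distrib]
          exact Finset.sum_congr rfl fun k _ => (add_smul _ _ _).symm
      _ = _ := Finset.sum_congr rfl fun k _ => by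
          rw [Complex.add_conj, smul_smul]
          norm_num
  exact smul_right_injective _ (two_ne_zero) h3

lemma separable_trace {σ : Matrix (dA × dB) (dA × dB) ℂ} (h : SeparableState σ) :
    σ.trace = 1 := by
  obtain ⟨n, p, s, t, hp, hsum, hs, ht, rfl⟩ := h
  rw [trace_sum]
  have : ∀ k ∈ Finset.univ, ((p k : ℂ) • (s k ⊗ₖ t k)).trace = ((p k : ℝ) : ℂ) := by
    intro k _
    rw [trace_smul, trace_kronecker, (hs k).2, (ht k).2, mul_one, smul_eq_mul, mul_one]
  rw [Finset.sum_congr rfl this]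
  push_cast
  exact_mod_cast congrArg (fun x : ℝ => (x : ℂ)) hsum

/-- The gammaSep feasible set is nonempty. -/
lemma gamma_nonempty (ρ : Matrix (dA × dB) (dA × dB) ℂ) (hρ : IsDensityMatrix ρ)
    [Nonempty dA] [Nonempty dB] :
    ∃ c : ℝ, ∃ (ap am : ℝ) (ρp ρm : Matrix (dA × dB) (dA × dB) ℂ),
    0 ≤ ap ∧ 0 ≤ am ∧ SeparableState ρp ∧ SeparableState ρm ∧
    ρ = (ap : ℂ) • ρp - (am : ℂ) • ρm ∧ c = ap + am := by
  obtain ⟨σ0, hσ0⟩ := exists_density dA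
  obtain ⟨τ0, hτ0⟩ := exists_density dB
  obtain ⟨n, r, σ, τ, hσ, hτ, hsum⟩ := exists_real_decomp ρ hρ.1.1
  -- append two extra terms with coefficients 1 and -1
  set r' : Fin (n+2) → ℝ := Fin.snoc (Fin.snoc r 1) (-1) with hr'
  set σ' : Fin (n+2) → Matrix dA dA ℂ := Fin.snoc (Fin.snoc σ σ0) σ0 with hσ'
  set τ' : Fin (n+2) → Matrix dB dB ℂ := Fin.snoc (Fin.snoc τ τ0) τ0 with hτ'
  have hσ'd : ∀ k, IsDensityMatrix (σ' k) := by
    intro k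
    refine Fin.lastCases ?_ (fun k => ?_) k
    · simp [hσ', Fin.snoc_last, hσ0]
    · refine Fin.lastCases ?_ (fun k => ?_) k
      · simp [hσ', Fin.snoc_last, Fin.snoc_castSucc, hσ0]
      · simp [hσ', Fin.snoc_castSucc, hσ k]
  have hτ'd : ∀ k, IsDensityMatrix (τ' k) := by
    intro k
    refine Fin.lastCases ?_ (fun k => ?_) k
    · simp [hτ', Fin.snoc_last, hτ0]
    · refine Fin.lastCases ?_ (fun k => ?_) k
      · simp [hτ', Fin.snoc_last, Fin.snoc_castSucc, hτ0]
      · simp [hτ', Fin.snoc_castSucc, hτ k]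
  have hsum' : ρ = ∑ k, ((r' k : ℝ) : ℂ) • (σ' k ⊗ₖ τ' k) := by
    rw [Fin.sum_univ_castSucc, Fin.sum_univ_castSucc]
    simp only [hr', hσ', hτ', Fin.snoc_last, Fin.snoc_castSucc]
    rw [hsum]
    push_cast
    simp only [neg_smul, one_smul]
    abel
  set rp : Fin (n+2) → ℝ := fun k => max (r' k) 0 with hrp
  set rm : Fin (n+2) → ℝ := fun k => max (-(r' k)) 0 with hrm
  set ap : ℝ := ∑ k, rp k with hap
  set am : ℝ := ∑ k, rm k with ham
  have hrpn : ∀ k, 0 ≤ rp k := fun k => le_max_right _ _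
  have hrmn : ∀ k, 0 ≤ rm k := fun k => le_max_right _ _
  have hap1 : (1:ℝ) ≤ ap := by
    have h1 : rp ((Fin.last n).castSucc : Fin (n+2)) = 1 := by
      simp [hrp, hr', Fin.snoc_castSucc, Fin.snoc_last]
    calc (1:ℝ) = rp ((Fin.last n).castSucc : Fin (n+2)) := h1.symm
      _ ≤ ap := Finset.single_le_sum (fun k _ => hrpn k) (Finset.mem_univ _)
  have ham1 : (1:ℝ) ≤ am := by
    have h1 : rm (Fin.last (n+1)) = 1 := by
      simp [hrm, hr', Fin.snoc_last]
    calc (1:ℝ) = rm (Fin.last (n+1)) := h1.symm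
      _ ≤ am := Finset.single_le_sum (fun k _ => hrmn k) (Finset.mem_univ _)
  have hap0 : (0:ℝ) < ap := lt_of_lt_of_le one_pos hap1
  have ham0 : (0:ℝ) < am := lt_of_lt_of_le one_pos ham1
  set ρp : Matrix (dA × dB) (dA × dB) ℂ := ∑ k, ((rp k / ap : ℝ) : ℂ) • (σ' k ⊗ₖ τ' k) with hρp
  set ρm : Matrix (dA × dB) (dA × dB) ℂ := ∑ k, ((rm k / am : ℝ) : ℂ) • (σ' k ⊗ₖ τ' k) with hρm
  have hsepp : SeparableState ρp := by
    refine ⟨n+2, fun k => rp k / ap, σ', τ', fun k => div_nonneg (hrpn k) hap0.le, ?_, hσ'd, hτ'd, rfl⟩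
    rw [← Finset.sum_div, ← hap, div_self hap0.ne']
  have hsepm : SeparableState ρm := by
    refine ⟨n+2, fun k => rm k / am, σ', τ', fun k => div_nonneg (hrmn k) ham0.le, ?_, hσ'd, hτ'd, rfl⟩
    rw [← Finset.sum_div, ← ham, div_self ham0.ne']
  refine ⟨ap + am, ap, am, ρp, ρm, hap0.le, ham0.le, hsepp, hsepm, ?_, rfl⟩
  rw [hρp, hρm, Finset.smul_sum, Finset.smul_sum, ← Finset.sum_sub_distrib, hsum']
  refine Finset.sum_congr rfl fun k _ => ?_
  rw [smul_smul, smul_smul, ← sub_smul, ← Complex.ofReal_mul, ← Complex.ofReal_mul,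
    mul_div_cancel₀ _ hap0.ne', mul_div_cancel₀ _ ham0.ne', ← Complex.ofReal_sub]
  congr 1
  exact_mod_cast congrArg (fun x : ℝ => (x : ℂ)) (max_zero_sub_max_neg_zero_eq_self (r' k)).symm

lemma main (ρ : Matrix (dA × dB) (dA × dB) ℂ) (hρ : IsDensityMatrix ρ)
    [Nonempty dA] [Nonempty dB] :
    gammaSep ρ = 1 + 2 * robustness ρ := by
  set SE := { t : ℝ | 0 ≤ t ∧ ∃ σ : Matrix (dA × dB) (dA × dB) ℂ,
    SeparableState σ ∧ SeparableState (((1 + t : ℝ) : ℂ)⁻¹ • (ρ + (t : ℂ) • σ)) } with hSE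
  set SG := { c : ℝ | ∃ (ap am : ℝ) (ρp ρm : Matrix (dA × dB) (dA × dB) ℂ),
    0 ≤ ap ∧ 0 ≤ am ∧ SeparableState ρp ∧ SeparableState ρm ∧
    ρ = (ap : ℂ) • ρp - (am : ℂ) • ρm ∧ c = ap + am } with hSG
  have hset : SG = (fun t : ℝ => 1 + 2 * t) '' SE := by
    ext c
    constructor
    · rintro ⟨ap, am, ρp, ρm, hap, ham, hsp, hsm, heq, hc⟩
      have htr : ((ap : ℂ)) - (am : ℂ) = 1 := by
        have := congrArg Matrix.trace heq
        rw [hρ.2, Matrix.trace_sub, Matrix.trace_smul, Matrix.trace_smul,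
          separable_trace hsp, separable_trace hsm] at this
        simpa using this.symm
      have hapam : ap = 1 + am := by
        have : ((ap - am : ℝ) : ℂ) = ((1:ℝ) : ℂ) := by push_cast; simpa using htr
        have := Complex.ofReal_inj.mp this
        linarith
      refine ⟨am, ⟨ham, ρm, hsm, ?_⟩, by rw [hc, hapam]; ring⟩
      have h1 : ρ + (am : ℂ) • ρm = ((1 + am : ℝ) : ℂ) • ρp := by
        rw [heq]; push_cast [hapam]; ring_nf; abel
      rw [h1, smul_smul, inv_mul_cancel₀, one_smul]
      · exact hsp
      · have : (0:ℝ) < 1 + am := by linarith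
        exact_mod_cast Complex.ofReal_ne_zero.mpr this.ne'
    · rintro ⟨t, ⟨ht0, σ, hσ, hsep⟩, rfl⟩
      have hpos : (0:ℝ) < 1 + t := by linarith
      refine ⟨1 + t, t, ((1 + t : ℝ) : ℂ)⁻¹ • (ρ + (t : ℂ) • σ), σ,
        by linarith, ht0, hsep, hσ, ?_, by ring⟩
      rw [smul_smul, mul_inv_cancel₀ (by exact_mod_cast Complex.ofReal_ne_zero.mpr hpos.ne'),
        one_smul]
      push_cast
      abel
  have hGne : SG.Nonempty := gamma_nonempty ρ hρ
  have hEne : SE.Nonempty := by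
    obtain ⟨c, hc⟩ := hGne
    rw [hset] at hc
    obtain ⟨t, ht, _⟩ := hc
    exact ⟨t, ht⟩
  have hEbdd : BddBelow SE := ⟨0, fun t ht => ht.1⟩
  have hmono : Monotone (fun t : ℝ => 1 + 2 * t) := fun a b h => by dsimp; linarith
  have hcont : ContinuousAt (fun t : ℝ => 1 + 2 * t) (sInf SE) := by fun_prop
  have := hmono.map_csInf_of_continuousAt hcont hEne hEbdd
  rw [gammaSep, robustness, ← hSE, ← hSG, hset, ← this]

end Two
end Aux

theorem gammaSep_eq_one_add_two_robustness {dA dB : ℕ}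
    (ρ : Matrix (Fin dA × Fin dB) (Fin dA × Fin dB) ℂ) (hρ : IsDensityMatrix ρ) :
    gammaSep ρ = 1 + 2 * robustness ρ := by
  have hA : Nonempty (Fin dA) := by
    by_contra h
    have hie : IsEmpty (Fin dA) := not_nonempty_iff.mp h
    have : IsEmpty (Fin dA × Fin dB) := inferInstance
    have h0 : ρ.trace = 0 := by simp [Matrix.trace]
    exact one_ne_zero (hρ.2 ▸ h0)
  have hB : Nonempty (Fin dB) := by
    by_contra h
    have hie : IsEmpty (Fin dB) := not_nonempty_iff.mp h
    have : IsEmpty (Fin dA × Fin dB) := inferInstance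
    have h0 : ρ.trace = 0 := by simp [Matrix.trace]
    exact one_ne_zero (hρ.2 ▸ h0)
  exact Aux.main ρ hρ
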